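/- Let K₁,…,Kₙ be closed convex subsets of the unit simplex Δ^m in ℝ^m, each with nonempty relative interior. Then the relative interiors of the Kᵢ have empty common intersection if and only if there exist vectors f₁,…,fₙ ∈ ℝ^m with Σᵢ fᵢ ≤ 0 (coordinatewise), ⟨xᵢ, fᵢ⟩ ≥ 0 for all xᵢ ∈ Kᵢ and all i, and there exist an index i* and x* ∈ K_{i*} with ⟨x*, f_{i*}⟩ > 0. -/

import Mathlib

open Finset



variable {F : Type*} [NormedAddCommGroup F] [NormedSpace ℝ F]

theorem mem_intrinsicInterior_iff_ball {s : Set F} {x : F} :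
    x ∈ intrinsicInterior ℝ s ↔ x ∈ affineSpan ℝ s ∧
      ∃ ε > 0, ∀ y ∈ affineSpan ℝ s, dist y x < ε → y ∈ s := by
  constructor
  · rintro ⟨⟨y, hy⟩, hyint, rfl⟩
    refine ⟨hy, ?_⟩
    rw [mem_interior_iff_mem_nhds, Metric.mem_nhds_iff] at hyint
    obtain ⟨ε, hε, hball⟩ := hyint
    refine ⟨ε, hε, fun z hz hdz => ?_⟩
    have : (⟨z, hz⟩ : affineSpan ℝ s) ∈ Metric.ball (⟨y, hy⟩ : affineSpan ℝ s) ε := by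
      simpa [Metric.mem_ball, Subtype.dist_eq] using hdz
    exact hball this
  · rintro ⟨hx, ε, hε, hball⟩
    refine ⟨⟨x, hx⟩, ?_, rfl⟩
    rw [mem_interior_iff_mem_nhds, Metric.mem_nhds_iff]
    refine ⟨ε, hε, fun z hz => ?_⟩
    exact hball z.1 z.2 (by simpa [Metric.mem_ball, Subtype.dist_eq] using hz)

theorem mem_affineSpan_of_vadd {s : Set F} {x v : F} (hx : x ∈ affineSpan ℝ s)
    (hv : v ∈ (affineSpan ℝ s).direction) : v + x ∈ affineSpan ℝ s := by
  simpa using AffineSubspace.vadd_mem_of_mem_direction hv hx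

/-- combination of a relative interior point with positive weight and a set point
is in the relative interior. -/
theorem combo_mem_intrinsicInterior {s : Set F} (hs : Convex ℝ s) {x' w : F}
    (hx' : x' ∈ intrinsicInterior ℝ s) (hw : w ∈ s) {l : ℝ} (h0 : 0 ≤ l) (h1 : l < 1) :
    (1 - l) • x' + l • w ∈ intrinsicInterior ℝ s := by
  rw [mem_intrinsicInterior_iff_ball] at hx' ⊢
  obtain ⟨hx'span, ε, hε, hball⟩ := hx'
  have hwspan : w ∈ affineSpan ℝ s := subset_affineSpan ℝ s hw
  set x := (1 - l) • x' + l • w with hxdef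
  have hxspan : x ∈ affineSpan ℝ s := by
    have : x = l • (w - x') + x' := by rw [hxdef]; ring_nf; module
    rw [this]
    exact mem_affineSpan_of_vadd hx'span
      (Submodule.smul_mem _ _ (AffineSubspace.vsub_mem_direction hwspan hx'span))
  refine ⟨hxspan, (1 - l) * ε, mul_pos (by linarith) hε, fun y hy hdy => ?_⟩
  set z := x' + (1 - l)⁻¹ • (y - x) with hzdef
  have hzspan : z ∈ affineSpan ℝ s := by
    rw [hzdef, add_comm]
    exact mem_affineSpan_of_vadd hx'span
      (Submodule.smul_mem _ _ (AffineSubspace.vsub_mem_direction hy hxspan))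
  have hl1 : (0:ℝ) < 1 - l := by linarith
  have hdz : dist z x' < ε := by
    rw [hzdef, dist_eq_norm]
    simp only [add_sub_cancel_left, norm_smul, Real.norm_eq_abs, abs_inv,
      abs_of_pos hl1]
    rw [inv_mul_lt_iff₀ hl1]
    calc ‖y - x‖ = dist y x := (dist_eq_norm _ _).symm
      _ < (1 - l) * ε := hdy
  have hz : z ∈ s := hball z hzspan hdz
  have hyz : y = (1 - l) • z + l • w := by
    rw [hzdef, hxdef]; rw [smul_add, smul_smul, mul_inv_cancel₀ (ne_of_gt hl1)]
    module
  rw [hyz]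
  exact hs hz hw (le_of_lt hl1) h0 (by ring)

/-- one can extend a segment from a set point slightly beyond a relative interior point. -/
theorem exists_extension_beyond {s : Set F} {x y : F}
    (hx : x ∈ intrinsicInterior ℝ s) (hy : y ∈ affineSpan ℝ s) :
    ∃ μ : ℝ, 1 < μ ∧ y + μ • (x - y) ∈ s := by
  rw [mem_intrinsicInterior_iff_ball] at hx
  obtain ⟨hxspan, ε, hε, hball⟩ := hx
  set d : ℝ := ε / (2 * (‖x - y‖ + 1)) with hd
  have hd0 : 0 < d := by positivity
  refine ⟨1 + d, by linarith, ?_⟩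
  have hw : y + (1 + d) • (x - y) = x + d • (x - y) := by module
  rw [hw]
  have hspanw : x + d • (x - y) ∈ affineSpan ℝ s := by
    rw [add_comm]
    exact mem_affineSpan_of_vadd hxspan
      (Submodule.smul_mem _ _ (AffineSubspace.vsub_mem_direction hxspan hy))
  refine hball _ hspanw ?_
  rw [dist_eq_norm, add_sub_cancel_left, norm_smul, Real.norm_eq_abs, abs_of_pos hd0, hd]
  rw [div_mul_eq_mul_div, div_lt_iff₀ (by positivity)]
  nlinarith [norm_nonneg (x - y)]

variable {G : Type*} [NormedAddCommGroup G] [NormedSpace ℝ G]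

theorem image_intrinsicInterior_subset' [FiniteDimensional ℝ G] (f : F →ₗ[ℝ] G)
    {S : Set F} (hS : Convex ℝ S) {x : F} (hx : x ∈ intrinsicInterior ℝ S) :
    f x ∈ intrinsicInterior ℝ (f '' S) := by
  have hxS : x ∈ S := intrinsicInterior_subset hx
  have hSne : (f '' S).Nonempty := ⟨f x, x, hxS, rfl⟩
  have himconv : Convex ℝ (f '' S) := hS.linear_image f
  obtain ⟨z', hz'⟩ := hSne.intrinsicInterior himconv
  obtain ⟨u, huS, huz⟩ := intrinsicInterior_subset hz'
  obtain ⟨μ, hμ, hext⟩ := exists_extension_beyond hx (subset_affineSpan ℝ S huS)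
  have h1μ : 0 < 1 / μ := by positivity
  have key := combo_mem_intrinsicInterior himconv hz'
    (Set.mem_image_of_mem f hext) (l := 1/μ) (le_of_lt h1μ)
    (by rw [div_lt_one (by linarith)]; exact hμ)
  have : (1 - 1/μ) • z' + (1/μ) • f (u + μ • (x - u)) = f x := by
    rw [← huz]; simp only [map_add, map_smul, map_sub]
    have hμ0 : μ ≠ 0 := by positivity
    match_scalars <;> field_simp <;> ring
  rwa [this] at key

theorem exists_preimage_intrinsicInterior (f : F →ₗ[ℝ] G)
    {S : Set F} (hS : Convex ℝ S) {x' : F} {z : G}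
    (hx' : x' ∈ intrinsicInterior ℝ S) (hz : z ∈ intrinsicInterior ℝ (f '' S)) :
    ∃ x ∈ intrinsicInterior ℝ S, f x = z := by
  have hx'S : x' ∈ S := intrinsicInterior_subset hx'
  have hy' : f x' ∈ f '' S := Set.mem_image_of_mem f hx'S
  obtain ⟨μ, hμ, hext⟩ := exists_extension_beyond hz (subset_affineSpan ℝ _ hy')
  obtain ⟨xw, hxwS, hxw⟩ := hext
  have h1μ : 0 < 1 / μ := by positivity
  refine ⟨(1 - 1/μ) • x' + (1/μ) • xw,
    combo_mem_intrinsicInterior hS hx' hxwS (le_of_lt h1μ)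
      (by rw [div_lt_one (by linarith)]; exact hμ), ?_⟩
  simp only [map_add, map_smul, hxw]
  have hμ0 : μ ≠ 0 := by positivity
  match_scalars <;> field_simp <;> ring

theorem exists_pos_functional [FiniteDimensional ℝ F] {s : Set F}
    (hconv : Convex ℝ s) (hne : s.Nonempty) (h0 : (0:F) ∉ intrinsicInterior ℝ s) :
    ∃ g : F →L[ℝ] ℝ, (∀ x ∈ s, 0 ≤ g x) ∧ ∃ x ∈ s, 0 < g x := by
  by_cases hspan : (0:F) ∈ affineSpan ℝ s
  · -- 0 lies in the affine span, which is then a linear subspace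
    set V : Submodule ℝ F := (affineSpan ℝ s).direction with hV
    have hmemV : ∀ y : F, y ∈ affineSpan ℝ s ↔ y ∈ V := by
      intro y
      constructor
      · intro hy
        simpa using AffineSubspace.vsub_mem_direction hy hspan
      · intro hy
        simpa using AffineSubspace.vadd_mem_of_mem_direction (hV ▸ hy) hspan
    set s' : Set V := Subtype.val ⁻¹' s with hs'
    have hs'conv : Convex ℝ s' := hconv.linear_preimage V.subtype
    -- a relative interior point gives an interior point of s'
    obtain ⟨x, hx⟩ := hne.intrinsicInterior hconv
    have hxball := mem_intrinsicInterior_iff_ball.1 hx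
    obtain ⟨hxspan, ε, hε, hball⟩ := hxball
    have hxV : x ∈ V := (hmemV x).1 hxspan
    have hx'int : (⟨x, hxV⟩ : V) ∈ interior s' := by
      rw [mem_interior_iff_mem_nhds, Metric.mem_nhds_iff]
      refine ⟨ε, hε, fun z hz => ?_⟩
      rw [Metric.mem_ball, Subtype.dist_eq] at hz
      exact hball z.1 ((hmemV z.1).2 z.2) hz
    have h0int : (0 : V) ∉ interior s' := by
      intro hmem
      rw [mem_interior_iff_mem_nhds, Metric.mem_nhds_iff] at hmem
      obtain ⟨ε', hε', hball'⟩ := hmem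
      refine h0 (mem_intrinsicInterior_iff_ball.2 ⟨hspan, ε', hε', fun y hy hdy => ?_⟩)
      have hyV : y ∈ V := (hmemV y).1 hy
      have : (⟨y, hyV⟩ : V) ∈ Metric.ball (0 : V) ε' := by
        rw [Metric.mem_ball, Subtype.dist_eq]; simpa using hdy
      exact hball' this
    obtain ⟨f, hf⟩ := geometric_hahn_banach_open_point (hs'conv.interior) isOpen_interior h0int
    simp only [map_zero] at hf
    have hfpos : ∀ a ∈ interior s', 0 < (-f) a := by
      intro a ha
      simpa using hf a ha
    have hfnn : ∀ a ∈ s', 0 ≤ (-f) a := by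
      intro a ha
      by_contra hlt
      push_neg at hlt
      set p : ℝ := (-f) ⟨x, hxV⟩ with hp
      have hppos : 0 < p := hfpos _ hx'int
      set q : ℝ := (-f) a with hq
      have hden : 0 < p - q := by linarith
      set t : ℝ := -q / (2 * (p - q)) with ht
      have ht0 : 0 < t := div_pos (by linarith) (by linarith)
      have ht1 : t ≤ 1/2 := by
        rw [ht, div_le_div_iff₀ (by linarith) (by norm_num)]
        nlinarith
      have hcombo : t • (⟨x, hxV⟩ : V) + (1 - t) • a ∈ interior s' :=
        hs'conv.combo_interior_closure_mem_interior hx'int (subset_closure ha)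
          ht0 (by linarith) (by ring)
      have hval := hfpos _ hcombo
      rw [map_add, map_smul, map_smul, smul_eq_mul, smul_eq_mul, ← hp, ← hq] at hval
      have htval : t * (p - q) = -q/2 := by
        rw [ht, div_mul_eq_mul_div, mul_comm 2 (p - q), ← div_div,
          mul_div_assoc, div_self (ne_of_gt hden)]
        ring
      nlinarith
    obtain ⟨g, hg, -⟩ := exists_extension_norm_eq V (-f)
    refine ⟨g, fun y hy => ?_, x, intrinsicInterior_subset hx, ?_⟩
    · have := hg ⟨y, (hmemV y).1 (subset_affineSpan ℝ s hy)⟩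
      simp only [Submodule.coe_subtype] at this
      rw [this]
      exact hfnn _ hy
    · have := hg ⟨x, hxV⟩
      rw [this]
      exact hfpos _ hx'int
  · -- 0 is not in the affine span: strict separation from a closed affine subspace
    obtain ⟨f, u, h0u, hu⟩ := geometric_hahn_banach_point_closed
      (AffineSubspace.convex _) (AffineSubspace.closed_of_finiteDimensional (affineSpan ℝ s))
      hspan
    simp only [map_zero] at h0u
    obtain ⟨x₀, hx₀⟩ := hne
    exact ⟨f, fun y hy => le_of_lt (lt_trans h0u (hu y (subset_affineSpan ℝ s hy))),
      x₀, hx₀, lt_trans h0u (hu x₀ (subset_affineSpan ℝ s hx₀))⟩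

theorem prod_mem_intrinsicInterior {D : Set F} {C : Submodule ℝ G} {d : F} {c : G}
    (hd : d ∈ intrinsicInterior ℝ D) (hc : c ∈ C) :
    (d, c) ∈ intrinsicInterior ℝ (D ×ˢ (C : Set G)) := by
  rw [mem_intrinsicInterior_iff_ball] at hd ⊢
  obtain ⟨hdspan, ε, hε, hball⟩ := hd
  have hdD : d ∈ D := by
    have := hball d hdspan (by simpa using hε)
    exact this
  refine ⟨subset_affineSpan ℝ _ (Set.mk_mem_prod hdD hc), ε, hε, fun q hq hdq => ?_⟩
  have hq1 : q.1 ∈ affineSpan ℝ D := by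
    have hle : affineSpan ℝ (D ×ˢ (C : Set G)) ≤
        AffineSubspace.comap (AffineMap.fst : F × G →ᵃ[ℝ] F) (affineSpan ℝ D) := by
      rw [affineSpan_le]
      rintro ⟨a, b⟩ ⟨ha, -⟩
      exact subset_affineSpan ℝ _ ha
    exact AffineSubspace.mem_comap.1 (hle hq)
  have hq2 : q.2 ∈ C := by
    have hle : affineSpan ℝ (D ×ˢ (C : Set G)) ≤
        AffineSubspace.comap (AffineMap.snd : F × G →ᵃ[ℝ] G) C.toAffineSubspace := by
      rw [affineSpan_le]
      rintro ⟨a, b⟩ ⟨-, hb⟩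
      exact Submodule.mem_toAffineSubspace.2 hb
    exact Submodule.mem_toAffineSubspace.1 (AffineSubspace.mem_comap.1 (hle hq))
  have hd1 : dist q.1 d < ε := lt_of_le_of_lt (by rw [Prod.dist_eq]; exact le_max_left _ _) hdq
  exact Set.mk_mem_prod (hball q.1 hq1 hd1) hq2

theorem repr_sum {n m : ℕ} (g : (Fin n → Fin m → ℝ) →L[ℝ] ℝ) (p : Fin n → Fin m → ℝ) :
    g p = ∑ i, ∑ j, p i j * g (Pi.single i (Pi.single j (1:ℝ))) := by
  have hp : p = ∑ i, ∑ j, p i j • (Pi.single i (Pi.single j 1) : Fin n → Fin m → ℝ) := by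
    funext a b
    simp only [Finset.sum_apply, Pi.smul_apply, Pi.single_apply, smul_eq_mul]
    rw [Finset.sum_eq_single a (fun i _ hi => by simp [if_neg (Ne.symm hi)]) (by simp)]
    simp [Pi.single_apply, Finset.sum_ite_eq', eq_comm]
  conv_lhs => rw [hp]
  rw [map_sum]
  refine Finset.sum_congr rfl fun i _ => ?_
  rw [map_sum]
  refine Finset.sum_congr rfl fun j _ => ?_
  rw [map_smul, smul_eq_mul]


/-- for closed convex subsets `K₁, …, Kₙ` of the unit simplex in
`ℝ^m`, each with nonempty relative interior, the relative interiors have empty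
common intersection iff there exist `f₁, …, fₙ ∈ ℝ^m` with `∑ᵢ fᵢ ≤ 0`
coordinatewise, `⟪xᵢ, fᵢ⟫ ≥ 0` for all `xᵢ ∈ Kᵢ`, and `⟪x*, f_{i*}⟫ > 0` for
some `i*` and `x* ∈ K_{i*}`. -/
theorem proper_separation_simplex (m n : ℕ) (hn : 0 < n)
    (K : Fin n → Set (Fin m → ℝ))
    (hconv : ∀ i, Convex ℝ (K i)) (hclosed : ∀ i, IsClosed (K i))
    (hsub : ∀ i, K i ⊆ stdSimplex ℝ (Fin m))
    (hne : ∀ i, (intrinsicInterior ℝ (K i)).Nonempty) :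
    (⋂ i, intrinsicInterior ℝ (K i)) = ∅ ↔
      ∃ f : Fin n → Fin m → ℝ,
        (∀ j, ∑ i, f i j ≤ 0) ∧
        (∀ i, ∀ x ∈ K i, 0 ≤ ∑ j, x j * f i j) ∧
        ∃ (i : Fin n) (x : Fin m → ℝ), x ∈ K i ∧ 0 < ∑ j, x j * f i j := by
  constructor
  · -- hard direction
    intro hiInter
    choose xri hxri using hne
    have hxriK : ∀ i, xri i ∈ K i := fun i => intrinsicInterior_subset (hxri i)
    set D : Set (Fin n → Fin m → ℝ) := Set.univ.pi K with hD
    have hmemD : ∀ p, p ∈ D ↔ ∀ i, p i ∈ K i := by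
      intro p; rw [hD, Set.mem_univ_pi]
    have hDconv : Convex ℝ D := convex_pi (fun i _ => hconv i)
    have hDne : D.Nonempty := ⟨xri, (hmemD _).2 hxriK⟩
    have hKcpt : ∀ i, IsCompact (K i) := fun i =>
      (isCompact_stdSimplex ℝ (Fin m)).of_isClosed_subset (hclosed i) (hsub i)
    set Cmap : (Fin m → ℝ) →ₗ[ℝ] (Fin n → Fin m → ℝ) :=
      LinearMap.pi (fun _ => LinearMap.id) with hCmap
    have hCmap_apply : ∀ v i, Cmap v i = v := fun v i => rfl
    set C : Submodule ℝ (Fin n → Fin m → ℝ) := LinearMap.range Cmap with hC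
    -- relative interior points of D project to relative interior points of the K i
    have step1 : ∀ p ∈ intrinsicInterior ℝ D, ∀ i, p i ∈ intrinsicInterior ℝ (K i) := by
      intro p hp i
      have him : (LinearMap.proj i : (Fin n → Fin m → ℝ) →ₗ[ℝ] (Fin m → ℝ)) '' D = K i := by
        apply Set.Subset.antisymm
        · rintro _ ⟨q, hq, rfl⟩
          exact (hmemD q).1 hq i
        · intro x hx
          refine ⟨Function.update xri i x, (hmemD _).2 fun i' => ?_, by
            simp only [LinearMap.proj_apply]; exact Function.update_self i x xri⟩
          rcases eq_or_ne i' i with rfl | hne'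
          · rwa [Function.update_self]
          · rw [Function.update_of_ne hne']; exact hxriK i'
      have := image_intrinsicInterior_subset'
        (LinearMap.proj i : (Fin n → Fin m → ℝ) →ₗ[ℝ] (Fin m → ℝ)) hDconv hp
      rwa [him] at this
    have hCD : ∀ v : Fin m → ℝ, Cmap v ∉ intrinsicInterior ℝ D := by
      intro v hv
      have hvmem : v ∈ ⋂ i, intrinsicInterior ℝ (K i) :=
        Set.mem_iInter.2 fun i => by
          have h' := step1 _ hv i
          rwa [hCmap_apply] at h'
      rw [hiInter] at hvmem
      exact hvmem
    set Lsub : (Fin n → Fin m → ℝ) × (Fin n → Fin m → ℝ) →ₗ[ℝ] (Fin n → Fin m → ℝ) :=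
      LinearMap.fst ℝ _ _ - LinearMap.snd ℝ _ _ with hLsub
    have hLsub_apply : ∀ q, Lsub q = q.1 - q.2 := fun q => rfl
    set E : Set (Fin n → Fin m → ℝ) := Lsub '' (D ×ˢ (C : Set (Fin n → Fin m → ℝ))) with hE
    have hprodconv : Convex ℝ (D ×ˢ (C : Set (Fin n → Fin m → ℝ))) := hDconv.prod C.convex
    have hEconv : Convex ℝ E := hprodconv.linear_image Lsub
    have hEne : E.Nonempty := ⟨xri - 0, ⟨(xri, 0), Set.mk_mem_prod ((hmemD _).2 hxriK) C.zero_mem, rfl⟩⟩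
    have h0E : (0 : Fin n → Fin m → ℝ) ∉ intrinsicInterior ℝ E := by
      intro h0
      obtain ⟨d', hd'⟩ := hDne.intrinsicInterior hDconv
      have hprod : (d', (0 : Fin n → Fin m → ℝ)) ∈
          intrinsicInterior ℝ (D ×ˢ (C : Set (Fin n → Fin m → ℝ))) :=
        prod_mem_intrinsicInterior hd' C.zero_mem
      obtain ⟨w, hwri, hw0⟩ := exists_preimage_intrinsicInterior Lsub hprodconv hprod h0
      have hw1 : w.1 ∈ intrinsicInterior ℝ D := by
        have := image_intrinsicInterior_subset' (LinearMap.fst ℝ _ _) hprodconv hwri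
        rwa [show (LinearMap.fst ℝ _ _) ''
            (D ×ˢ (C : Set (Fin n → Fin m → ℝ))) = D from
          Set.fst_image_prod _ ⟨0, C.zero_mem⟩] at this
      have hw2 : w.2 ∈ C := (intrinsicInterior_subset hwri).2
      obtain ⟨v, hv⟩ := hw2
      have hw12 : w.1 = w.2 := by
        have := hw0
        rw [hLsub_apply] at this
        exact sub_eq_zero.1 this
      exact hCD v (by rw [hv, ← hw12]; exact hw1)
    obtain ⟨g, hgnn, e, heE, hgpos⟩ := exists_pos_functional hEconv hEne h0E
    have hgDC : ∀ d ∈ D, ∀ c ∈ C, 0 ≤ g d - g c := by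
      intro d hd c hc
      have := hgnn _ ⟨(d, c), Set.mk_mem_prod hd hc, rfl⟩
      rwa [hLsub_apply, map_sub] at this
    have hgC : ∀ c ∈ C, g c = 0 := by
      intro c hc
      by_contra hgc
      have h1 := hgDC xri ((hmemD _).2 hxriK) (((g xri + 1)/(g c)) • c) (C.smul_mem _ hc)
      rw [map_smul, smul_eq_mul, div_mul_cancel₀ _ hgc] at h1
      linarith
    have hgD : ∀ d ∈ D, 0 ≤ g d := by
      intro d hd
      have := hgDC d hd 0 C.zero_mem
      rwa [map_zero, sub_zero] at this
    have hgposD : ∃ d ∈ D, 0 < g d := by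
      obtain ⟨⟨d, c⟩, ⟨hd, hc⟩, rfl⟩ := heE
      rw [hLsub_apply, map_sub, hgC c hc, sub_zero] at hgpos
      exact ⟨d, hd, hgpos⟩
    -- coordinates of g
    set f₀ : Fin n → Fin m → ℝ := fun i j => g (Pi.single i (Pi.single j (1:ℝ))) with hf₀
    have hrepr : ∀ p, g p = ∑ i, ∑ j, p i j * f₀ i j := fun p => repr_sum g p
    set φ : Fin n → (Fin m → ℝ) → ℝ := fun i x => ∑ j, x j * f₀ i j with hφ
    have hφcont : ∀ i, ContinuousOn (φ i) (K i) := by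
      intro i
      apply Continuous.continuousOn
      exact continuous_finset_sum _ fun j _ => ((continuous_apply j).mul continuous_const)
    have hmin : ∀ i, ∃ x ∈ K i, IsMinOn (φ i) (K i) x := fun i =>
      (hKcpt i).exists_isMinOn ⟨xri i, hxriK i⟩ (hφcont i)
    choose xm hxmK hxmmin using hmin
    set s : ℝ := ∑ i, φ i (xm i) with hs
    have hs0 : 0 ≤ s := by
      have hxmD : xm ∈ D := (hmemD _).2 hxmK
      have := hgD xm hxmD
      rwa [hrepr] at this
    have hn0 : (0:ℝ) < n := by exact_mod_cast hn
    set β : Fin n → ℝ := fun i => φ i (xm i) - s / n with hβ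
    have hβsum : ∑ i, β i = 0 := by
      rw [hβ]
      rw [Finset.sum_sub_distrib, Finset.sum_const, card_univ, Fintype.card_fin, ← hs,
        nsmul_eq_mul]
      field_simp
      ring
    refine ⟨fun i j => f₀ i j - β i, ?_, ?_, ?_⟩
    · -- column sums
      intro j
      have hcol : ∑ i, f₀ i j = 0 := by
        have hmem : Cmap (Pi.single j (1:ℝ)) ∈ C := ⟨_, rfl⟩
        have h0 := hgC _ hmem
        rw [hrepr] at h0
        rw [← h0]
        refine Finset.sum_congr rfl fun i _ => ?_
        rw [Finset.sum_eq_single j (fun j' _ hj' => by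
          rw [hCmap_apply, Pi.single_apply, if_neg hj', zero_mul]) (by simp)]
        rw [hCmap_apply, Pi.single_eq_same, one_mul]
      rw [Finset.sum_sub_distrib, hcol, hβsum, sub_zero]
    · -- nonnegativity
      intro i x hx
      have hxsum : ∑ j, x j = 1 := (hsub i hx).2
      have hval : ∑ j, x j * (f₀ i j - β i) = φ i x - β i := by
        rw [hφ]
        simp only [mul_sub]
        rw [Finset.sum_sub_distrib, ← Finset.sum_mul, hxsum, one_mul]
      rw [hval, hβ]
      have hmle : φ i (xm i) ≤ φ i x := isMinOn_iff.1 (hxmmin i) x hx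
      have hsn : 0 ≤ s / n := div_nonneg hs0 (le_of_lt hn0)
      linarith [hmle]
    · -- strict positivity
      rcases lt_or_eq_of_le hs0 with hspos | hszero
      · refine ⟨⟨0, hn⟩, xri ⟨0, hn⟩, hxriK _, ?_⟩
        have hxsum : ∑ j, xri ⟨0, hn⟩ j = 1 := (hsub _ (hxriK ⟨0, hn⟩)).2
        have hval : ∑ j, xri ⟨0, hn⟩ j * (f₀ ⟨0, hn⟩ j - β ⟨0, hn⟩)
            = φ ⟨0, hn⟩ (xri ⟨0, hn⟩) - β ⟨0, hn⟩ := by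
          rw [hφ]
          simp only [mul_sub]
          rw [Finset.sum_sub_distrib, ← Finset.sum_mul, hxsum, one_mul]
        rw [hval, hβ]
        have hminle : φ ⟨0, hn⟩ (xm ⟨0, hn⟩) ≤ φ ⟨0, hn⟩ (xri ⟨0, hn⟩) :=
          isMinOn_iff.1 (hxmmin ⟨0, hn⟩) _ (hxriK ⟨0, hn⟩)
        have hsn : 0 < s / n := div_pos hspos hn0
        linarith [hminle]
      · obtain ⟨d, hd, hgd⟩ := hgposD
        have hdsum : ∑ i, φ i (xm i) < ∑ i, φ i (d i) := by
          rw [← hs, ← hszero]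
          rw [hrepr] at hgd
          exact hgd
        obtain ⟨i, -, hi⟩ := Finset.exists_lt_of_sum_lt hdsum
        refine ⟨i, d i, (hmemD _).1 hd i, ?_⟩
        have hxsum : ∑ j, d i j = 1 := (hsub i ((hmemD _).1 hd i)).2
        have hval : ∑ j, d i j * (f₀ i j - β i) = φ i (d i) - β i := by
          rw [hφ]
          simp only [mul_sub]
          rw [Finset.sum_sub_distrib, ← Finset.sum_mul, hxsum, one_mul]
        rw [hval]
        have hβi : β i = φ i (xm i) - s / n := rfl
        rw [hβi, ← hszero, zero_div, sub_zero]
        linarith [hi]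
  · -- easy direction
    rintro ⟨f, hsum, hnn, i₀, x₀, hx₀, hpos⟩
    rw [Set.eq_empty_iff_forall_notMem]
    intro x hx
    rw [Set.mem_iInter] at hx
    have hxK : ∀ i, x ∈ K i := fun i => intrinsicInterior_subset (hx i)
    have hxnn : ∀ j, 0 ≤ x j := (hsub i₀ (hxK i₀)).1
    set t : Fin n → ℝ := fun i => ∑ j, x j * f i j with ht
    have htnn : ∀ i, 0 ≤ t i := fun i => hnn i x (hxK i)
    have htsum : ∑ i, t i ≤ 0 := by
      rw [ht]
      rw [Finset.sum_comm]
      apply Finset.sum_nonpos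
      intro j _
      rw [← Finset.mul_sum]
      calc x j * ∑ i, f i j ≤ x j * 0 := mul_le_mul_of_nonneg_left (hsum j) (hxnn j)
        _ = 0 := mul_zero _
    have hti₀ : t i₀ = 0 := by
      have h1 : t i₀ ≤ ∑ i, t i :=
        Finset.single_le_sum (fun i _ => htnn i) (Finset.mem_univ i₀)
      linarith [htnn i₀]
    -- extend the segment from x₀ through x slightly beyond x
    obtain ⟨hxspan, ε, hε, hball⟩ := mem_intrinsicInterior_iff_ball.1 (hx i₀)
    set sδ : ℝ := ε / (2 * (‖x - x₀‖ + 1)) with hsδ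
    have hsδ0 : 0 < sδ := by positivity
    set w : Fin m → ℝ := x + sδ • (x - x₀) with hw
    have hwspan : w ∈ affineSpan ℝ (K i₀) := by
      rw [hw, add_comm]
      exact mem_affineSpan_of_vadd hxspan
        (Submodule.smul_mem _ _
          (AffineSubspace.vsub_mem_direction hxspan (subset_affineSpan ℝ _ hx₀)))
    have hwK : w ∈ K i₀ := by
      refine hball w hwspan ?_
      rw [hw, dist_eq_norm, add_sub_cancel_left, norm_smul, Real.norm_eq_abs,
        abs_of_pos hsδ0, hsδ, div_mul_eq_mul_div, div_lt_iff₀ (by positivity)]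
      nlinarith [norm_nonneg (x - x₀)]
    have hcontra := hnn i₀ w hwK
    have hwval : ∑ j, w j * f i₀ j
        = (1 + sδ) * (∑ j, x j * f i₀ j) - sδ * (∑ j, x₀ j * f i₀ j) := by
      rw [Finset.mul_sum, Finset.mul_sum, ← Finset.sum_sub_distrib]
      refine Finset.sum_congr rfl fun j _ => ?_
      rw [hw]
      simp only [Pi.add_apply, Pi.smul_apply, Pi.sub_apply, smul_eq_mul]
      ring
    have h00 : (∑ j, x j * f i₀ j) = 0 := hti₀
    rw [hwval, h00] at hcontra
    nlinarith [hcontra, hpos, hsδ0]
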